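/- Let u : ℤ⁴ → ℂ be nowhere zero and let μ⁽¹⁾, μ⁽²⁾, μ⁽³⁾, μ⁽⁰⁾ : ℤ → ℂ. Suppose u satisfies, for all l = (l₁,l₂,l₃,l₀) ∈ ℤ⁴, the full system: the three Q1_{δ=0} equations in cleared form (u(l)+u(l+e_i))(u(l+e_j)+u(l+e_i+e_j))·μ⁽ʲ⁾(l_j) = (u(l)+u(l+e_j))(u(l+e_i+e_j)+u(l+e_i))·μ⁽ⁱ⁾(l_i) for (i,j) ∈ {(1,2),(2,3),(3,1)}, and the three H1_{ε=0} equations (1/u(l)+1/u(l+e_k))(u(l+e₀)+u(l+e_k+e₀)) = −μ⁽ᵏ⁾(l_k)·μ⁽⁰⁾(l₀) for k ∈ {1,2,3}. Define ũ(l₁,l₂,l₃,l₀) = −u(1−l₁,l₂,l₃,l₀) and parameters μ̃⁽¹⁾(l) = μ⁽¹⁾(−l), μ̃⁽²⁾ = μ⁽²⁾, μ̃⁽³⁾ = μ⁽³⁾, μ̃⁽⁰⁾ = μ⁽⁰⁾. Then ũ satisfies the same full system with parameters μ̃⁽¹⁾, μ̃⁽²⁾, μ̃⁽³⁾, μ̃⁽⁰⁾.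 -/
import Mathlib


/-- The multi-dimensionally consistent system on ℤ⁴: the three Q1_{δ=0}
equations (in cleared form) on the 2-faces in directions (1,2), (2,3), (3,1),
and the three H1_{ε=0} equations on the 2-faces in directions (k,0),
k = 1,2,3, with edge parameters μ⁽ⁱ⁾(l_i) and μ⁽⁰⁾(l₀). -/
def GarnierLatticeSystem (u : ℤ → ℤ → ℤ → ℤ → ℂ) (μ1 μ2 μ3 μ0 : ℤ → ℂ) : Prop :=
  (∀ l1 l2 l3 l0 : ℤ,
    (u l1 l2 l3 l0 + u (l1+1) l2 l3 l0)
      * (u l1 (l2+1) l3 l0 + u (l1+1) (l2+1) l3 l0) * μ2 l2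
    = (u l1 l2 l3 l0 + u l1 (l2+1) l3 l0)
      * (u (l1+1) (l2+1) l3 l0 + u (l1+1) l2 l3 l0) * μ1 l1)
  ∧ (∀ l1 l2 l3 l0 : ℤ,
    (u l1 l2 l3 l0 + u l1 (l2+1) l3 l0)
      * (u l1 l2 (l3+1) l0 + u l1 (l2+1) (l3+1) l0) * μ3 l3
    = (u l1 l2 l3 l0 + u l1 l2 (l3+1) l0)
      * (u l1 (l2+1) (l3+1) l0 + u l1 (l2+1) l3 l0) * μ2 l2)
  ∧ (∀ l1 l2 l3 l0 : ℤ,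
    (u l1 l2 l3 l0 + u l1 l2 (l3+1) l0)
      * (u (l1+1) l2 l3 l0 + u (l1+1) l2 (l3+1) l0) * μ1 l1
    = (u l1 l2 l3 l0 + u (l1+1) l2 l3 l0)
      * (u (l1+1) l2 (l3+1) l0 + u l1 l2 (l3+1) l0) * μ3 l3)
  ∧ (∀ l1 l2 l3 l0 : ℤ,
    (1 / u l1 l2 l3 l0 + 1 / u (l1+1) l2 l3 l0)
      * (u l1 l2 l3 (l0+1) + u (l1+1) l2 l3 (l0+1)) = -(μ1 l1 * μ0 l0))
  ∧ (∀ l1 l2 l3 l0 : ℤ,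
    (1 / u l1 l2 l3 l0 + 1 / u l1 (l2+1) l3 l0)
      * (u l1 l2 l3 (l0+1) + u l1 (l2+1) l3 (l0+1)) = -(μ2 l2 * μ0 l0))
  ∧ (∀ l1 l2 l3 l0 : ℤ,
    (1 / u l1 l2 l3 l0 + 1 / u l1 l2 (l3+1) l0)
      * (u l1 l2 l3 (l0+1) + u l1 l2 (l3+1) (l0+1)) = -(μ3 l3 * μ0 l0))

/-- The Dynkin-diagram automorphism ϖ₁ of the extended affine Weyl group
symmetry W̃(A₁⁽¹⁾) acting in the first lattice direction:
u ↦ −u(1−l₁,·), μ⁽¹⁾(l) ↦ μ⁽¹⁾(−l) preserves the full system. -/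
theorem stmt_9 (u : ℤ → ℤ → ℤ → ℤ → ℂ) (μ1 μ2 μ3 μ0 : ℤ → ℂ)
    (hu : ∀ l1 l2 l3 l0 : ℤ, u l1 l2 l3 l0 ≠ 0)
    (hsys : GarnierLatticeSystem u μ1 μ2 μ3 μ0) :
    GarnierLatticeSystem (fun l1 l2 l3 l0 => -u (1 - l1) l2 l3 l0)
      (fun l => μ1 (-l)) μ2 μ3 μ0 := by
  obtain ⟨h12, h23, h31, h10, h20, h30⟩ := hsys
  refine ⟨?_, ?_, ?_, ?_, ?_, ?_⟩ <;> intro l1 l2 l3 l0 <;>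
    simp only [show (1:ℤ) - l1 = -l1 + 1 from by ring,
      show (1:ℤ) - (l1+1) = -l1 from by ring, one_div, inv_neg]
  · linear_combination (h12 (-l1) l2 l3 l0)
  · linear_combination (h23 (-l1+1) l2 l3 l0)
  · linear_combination (h31 (-l1) l2 l3 l0)
  · linear_combination (h10 (-l1) l2 l3 l0)
  · linear_combination (h20 (-l1+1) l2 l3 l0)
  · linear_combination (h30 (-l1+1) l2 l3 l0)
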